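/- For the Efron-Stein components f_S(x) = Σ_{S' ⊆ S} (-1)^{|S \ S'|} E[f | X_{S'} = x_{S'}], if S' is a strict subset of S then E[f_S | X_{S'} = x_{S'}] = 0 for every x_{S'}. -/

import Mathlib

open Finset

/-- Conditional expectation of `g` given `X_S = x_S`, for the product of the
discrete probability measures `μ i` (each assumed to sum to `1`). -/
noncomputable def condExp {n : ℕ} {Ω : Fin n → Type*} [∀ i, Fintype (Ω i)]
    (μ : ∀ i, Ω i → ℝ) (S : Finset (Fin n)) (g : (∀ i, Ω i) → ℝ) (x : ∀ i, Ω i) : ℝ :=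
  ∑ y : ∀ i, Ω i, (∏ i, μ i (y i)) * g (fun i => if i ∈ S then x i else y i)

section Aux

variable {n : ℕ} {Ω : Fin n → Type} [∀ i, Fintype (Ω i)]

lemma sum_prod_mu (μ : ∀ i, Ω i → ℝ) (hμ1 : ∀ i, ∑ a, μ i a = 1) :
    ∑ y : ∀ i, Ω i, ∏ i, μ i (y i) = 1 := by
  classical
  rw [← Fintype.piFinset_univ, ← Finset.prod_univ_sum]
  simp [hμ1]

lemma condExp_comp (μ : ∀ i, Ω i → ℝ) (hμ1 : ∀ i, ∑ a, μ i a = 1)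
    (S' S'' : Finset (Fin n)) (f : (∀ i, Ω i) → ℝ) (x : ∀ i, Ω i) :
    condExp μ S' (condExp μ S'' f) x = condExp μ (S' ∩ S'') f x := by
  classical
  unfold condExp
  simp only [Finset.mul_sum]
  rw [← Fintype.sum_prod_type']
  set G : ((∀ i, Ω i) × (∀ i, Ω i)) → ℝ := fun p =>
    (∏ i, μ i (p.1 i)) * ((∏ i, μ i (p.2 i)) *
      f (fun i => if i ∈ S'' then (if i ∈ S' then x i else p.1 i) else p.2 i)) with hG
  have hinv : Function.Involutive (fun p : ((∀ i, Ω i) × (∀ i, Ω i)) =>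
      ((fun i => if i ∈ S'' then p.1 i else p.2 i),
       (fun i => if i ∈ S'' then p.2 i else p.1 i))) := by
    intro p
    refine Prod.ext ?_ ?_ <;> funext i <;> by_cases h : i ∈ S'' <;> simp [h]
  rw [← Equiv.sum_comp (Function.Involutive.toPerm _ hinv) G]
  have hGe : ∀ p : ((∀ i, Ω i) × (∀ i, Ω i)),
      G ((Function.Involutive.toPerm _ hinv) p) = ((∏ i, μ i (p.1 i)) *
        f (fun i => if i ∈ S' ∩ S'' then x i else p.1 i)) * (∏ i, μ i (p.2 i)) := by
    rintro ⟨z, u⟩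
    simp only [Function.Involutive.coe_toPerm]
    have h1 : (∏ i, μ i (if i ∈ S'' then z i else u i)) *
        (∏ i, μ i (if i ∈ S'' then u i else z i)) =
        (∏ i, μ i (z i)) * (∏ i, μ i (u i)) := by
      rw [← Finset.prod_mul_distrib, ← Finset.prod_mul_distrib]
      refine Finset.prod_congr rfl fun i _ => ?_
      by_cases h : i ∈ S'' <;> simp [h, mul_comm]
    have h2 : (fun i => if i ∈ S'' then
          (if i ∈ S' then x i else (if i ∈ S'' then z i else u i))
          else (if i ∈ S'' then u i else z i)) =
        (fun i => if i ∈ S' ∩ S'' then x i else z i) := by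
      funext i
      by_cases h : i ∈ S'' <;> by_cases h' : i ∈ S' <;> simp [h, h']
    show (∏ i, μ i (if i ∈ S'' then z i else u i)) *
        ((∏ i, μ i (if i ∈ S'' then u i else z i)) * f _) = _
    rw [h2, ← mul_assoc, h1]
    ring
  rw [Finset.sum_congr rfl fun p _ => hGe p, Fintype.sum_prod_type]
  have hinner : ∀ z : ∀ i, Ω i,
      ∑ u : ∀ i, Ω i, ((∏ i, μ i (z i)) *
        f (fun i => if i ∈ S' ∩ S'' then x i else z i)) * (∏ i, μ i (u i))
      = (∏ i, μ i (z i)) * f (fun i => if i ∈ S' ∩ S'' then x i else z i) := by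
    intro z
    rw [← Finset.mul_sum, sum_prod_mu μ hμ1, mul_one]
  rw [Finset.sum_congr rfl fun z _ => hinner z]

lemma neg_one_pow_sub (a b : ℕ) (h : b ≤ a) :
    (-1 : ℝ) ^ (a - b) = (-1) ^ a * (-1) ^ b := by
  have hb : (-1 : ℝ) ^ b * (-1) ^ b = 1 := by
    rw [← pow_add]
    exact Even.neg_one_pow ⟨b, rfl⟩
  have h1 : (-1 : ℝ) ^ (a - b) * (-1) ^ b = (-1) ^ a := by
    rw [← pow_add, Nat.sub_add_cancel h]
  calc (-1 : ℝ) ^ (a - b) = (-1 : ℝ) ^ (a - b) * ((-1) ^ b * (-1) ^ b) := by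
        rw [hb, mul_one]
    _ = ((-1 : ℝ) ^ (a - b) * (-1) ^ b) * (-1) ^ b := by ring
    _ = (-1) ^ a * (-1) ^ b := by rw [h1]

end Aux

/-- For the Efron-Stein components
`f_S(x) = Σ_{S' ⊆ S} (-1)^{|S \ S'|} E[f | X_{S'} = x_{S'}]`, if `S'` is a strict subset
of `S` then `E[f_S | X_{S'} = x_{S'}] = 0` for every `x_{S'}`. -/
theorem efron_stein_component_condexp_zero (n : ℕ) (Ω : Fin n → Type)
    [∀ i, Fintype (Ω i)] [∀ i, Nonempty (Ω i)]
    (μ : ∀ i, Ω i → ℝ) (hμ0 : ∀ i a, 0 ≤ μ i a) (hμ1 : ∀ i, ∑ a, μ i a = 1)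
    (f : (∀ i, Ω i) → ℝ) (S S' : Finset (Fin n)) (hSS' : S' ⊂ S) (x : ∀ i, Ω i) :
    condExp μ S'
        (fun z => ∑ S'' ∈ S.powerset, (-1 : ℝ) ^ (S \ S'').card * condExp μ S'' f z)
        x = 0 := by
  classical
  have hS'S : S' ⊆ S := hSS'.subset
  have lin : condExp μ S'
      (fun z => ∑ S'' ∈ S.powerset, (-1 : ℝ) ^ (S \ S'').card * condExp μ S'' f z) x
      = ∑ S'' ∈ S.powerset, (-1 : ℝ) ^ (S \ S'').card *
          condExp μ S' (condExp μ S'' f) x := by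
    unfold condExp
    simp only [Finset.mul_sum]
    rw [Finset.sum_comm]
    refine Finset.sum_congr rfl fun S'' _ => ?_
    refine Finset.sum_congr rfl fun y _ => ?_
    refine Finset.sum_congr rfl fun y' _ => ?_
    ring
  rw [lin]
  simp only [fun S'' => condExp_comp μ hμ1 S' S'' f x]
  rw [Finset.sum_nbij' (i := fun S'' => (S'' ∩ S', S'' \ S'))
      (j := fun p : Finset (Fin n) × Finset (Fin n) => p.1 ∪ p.2)
      (t := S'.powerset ×ˢ (S \ S').powerset)
      (g := fun p => (-1 : ℝ) ^ (S \ (p.1 ∪ p.2)).card *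
        condExp μ (S' ∩ (p.1 ∪ p.2)) f x)
      (hi := ?_) (hj := ?_) (left_neg := ?_) (right_neg := ?_) (h := ?_)]
  · -- the reindexed sum vanishes
    rw [Finset.sum_product]
    refine Finset.sum_eq_zero fun T hT => ?_
    rw [Finset.mem_powerset] at hT
    have hconst : ∀ R ∈ (S \ S').powerset,
        (-1 : ℝ) ^ (S \ (T ∪ R)).card * condExp μ (S' ∩ (T ∪ R)) f x
          = ((-1 : ℝ) ^ (S \ T).card * condExp μ T f x) * (-1) ^ R.card := by
      intro R hR
      rw [Finset.mem_powerset] at hR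
      have hRS : R ⊆ S \ T := hR.trans (Finset.sdiff_subset_sdiff le_rfl hT)
      have h1 : S \ (T ∪ R) = (S \ T) \ R := by
        ext a; simp only [Finset.mem_sdiff, Finset.mem_union]; tauto
      have h2 : S' ∩ (T ∪ R) = T := by
        ext a
        simp only [Finset.mem_inter, Finset.mem_union]
        constructor
        · rintro ⟨ha, hb | hb⟩
          · exact hb
          · exact absurd ha (Finset.mem_sdiff.1 (hR hb)).2
        · intro h; exact ⟨hT h, Or.inl h⟩
      rw [h1, h2, Finset.card_sdiff_of_subset hRS,
        neg_one_pow_sub _ _ (Finset.card_le_card hRS)]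
      ring
    rw [Finset.sum_congr rfl hconst, ← Finset.mul_sum]
    have hne : (S \ S').Nonempty := Finset.sdiff_nonempty.2 hSS'.2
    have hz : ∑ R ∈ (S \ S').powerset, (-1 : ℝ) ^ R.card = 0 := by
      exact_mod_cast Finset.sum_powerset_neg_one_pow_card_of_nonempty hne
    rw [hz, mul_zero]
  · intro S'' hS''
    rw [Finset.mem_powerset] at hS''
    rw [Finset.mem_product, Finset.mem_powerset, Finset.mem_powerset]
    exact ⟨Finset.inter_subset_right, Finset.sdiff_subset_sdiff hS'' le_rfl⟩
  · rintro ⟨T, R⟩ hTR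
    rw [Finset.mem_product, Finset.mem_powerset, Finset.mem_powerset] at hTR
    rw [Finset.mem_powerset]
    exact Finset.union_subset (hTR.1.trans hS'S) (hTR.2.trans Finset.sdiff_subset)
  · intro S'' _
    ext a; simp only [Finset.mem_union, Finset.mem_inter, Finset.mem_sdiff]; tauto
  · rintro ⟨T, R⟩ hTR
    rw [Finset.mem_product, Finset.mem_powerset, Finset.mem_powerset] at hTR
    have hR' : ∀ a ∈ R, a ∉ S' := fun a ha => (Finset.mem_sdiff.1 (hTR.2 ha)).2
    refine Prod.ext ?_ ?_
    · ext a
      simp only [Finset.mem_inter, Finset.mem_union]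
      constructor
      · rintro ⟨hb | hb, ha⟩
        · exact hb
        · exact absurd ha (hR' a hb)
      · intro h; exact ⟨Or.inl h, hTR.1 h⟩
    · ext a
      simp only [Finset.mem_sdiff, Finset.mem_union]
      constructor
      · rintro ⟨hb | hb, ha⟩
        · exact absurd (hTR.1 hb) ha
        · exact hb
      · intro h; exact ⟨Or.inr h, hR' a h⟩
  · intro S'' _
    have hu : (S'' ∩ S') ∪ (S'' \ S') = S'' := by
      ext a; simp only [Finset.mem_union, Finset.mem_inter, Finset.mem_sdiff]; tauto
    dsimp only
    rw [hu, Finset.inter_comm S' S'']
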